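/- Let h, g : ℝ → ℝ be twice differentiable functions on [0, T] satisfying h''(t) ≥ h(t) and g''(t) = g(t) for all t ∈ [0, T], with h(0) = g(0) and h'(0) = g'(0). If h(t) ≥ 0 and g(t) ≥ 0 for all t ∈ [0, T], then h(t) ≥ g(t) for all t ∈ [0, T]. -/

import Mathlib

open Set Filter

/-- One-sided derivative sign: if `f 0 = 0`, `f ≥ 0` on `(0, b]` and `f` has derivative
`d` at `0`, then `d ≥ 0`. -/
private lemma aux_slope_nonneg {f : ℝ → ℝ} {d b : ℝ} (hb : 0 < b)
    (hf : HasDerivAt f d 0) (h0 : f 0 = 0)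
    (hpos : ∀ s ∈ Set.Ioc (0:ℝ) b, 0 ≤ f s) : 0 ≤ d := by
  have h1 : Tendsto (slope f 0) (nhdsWithin 0 (Set.Ioi 0)) (nhds d) :=
    (hasDerivAt_iff_tendsto_slope.mp hf).mono_left
      (nhdsWithin_mono _ (fun x hx => ne_of_gt hx))
  refine ge_of_tendsto h1 ?_
  filter_upwards [Ioc_mem_nhdsGT_of_mem (Set.left_mem_Ico.mpr hb)] with s hs
  have hsl : slope f 0 s = f s / s := by
    simp [slope_def_field, h0]
  rw [hsl]
  exact div_nonneg (hpos s hs) (le_of_lt hs.1)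

/-- ODE uniqueness: if `g'' = g` on `[0,T]` and `g` vanishes to first order at a point of
`[0,T]`, then `g ≡ 0` on `[0,T]`. -/
private lemma aux_ode_zero {g : ℝ → ℝ} {T a : ℝ} (hT : 0 < T)
    (hg : Differentiable ℝ g) (hg' : Differentiable ℝ (deriv g))
    (geq : ∀ t ∈ Set.Icc 0 T, deriv (deriv g) t = g t)
    (ha : a ∈ Set.Icc 0 T) (hga : g a = 0) (hga' : deriv g a = 0) :
    ∀ t ∈ Set.Icc 0 T, g t = 0 := by
  have hud := uniqueDiffOn_Icc hT
  -- p = (g' - g) e^t  is constant on [0,T]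
  set p : ℝ → ℝ := fun t => (deriv g t - g t) * Real.exp t with hp
  have hpd : Differentiable ℝ p := (hg'.sub hg).mul Real.differentiable_exp
  have hpc : ∀ x ∈ Set.Icc 0 T, p x = p 0 := by
    refine constant_of_derivWithin_zero hpd.differentiableOn ?_
    intro x hx
    rw [(hpd x).derivWithin (hud x (Set.Ico_subset_Icc_self hx))]
    have hd : deriv p x = (deriv (deriv g) x - deriv g x) * Real.exp x
        + (deriv g x - g x) * Real.exp x := by
      rw [hp]
      rw [deriv_fun_mul ((hg' x).fun_sub (hg x)) (Real.differentiable_exp x),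
        deriv_fun_sub (hg' x) (hg x), Real.deriv_exp]
    rw [hd, geq x (Set.Ico_subset_Icc_self hx)]
    ring
  -- q = (g' + g) e^{-t} is constant on [0,T]
  set q : ℝ → ℝ := fun t => (deriv g t + g t) * Real.exp (-t) with hq
  have hexp : Differentiable ℝ (fun t : ℝ => Real.exp (-t)) :=
    Real.differentiable_exp.comp differentiable_neg
  have hqd : Differentiable ℝ q := (hg'.add hg).mul hexp
  have hqc : ∀ x ∈ Set.Icc 0 T, q x = q 0 := by
    refine constant_of_derivWithin_zero hqd.differentiableOn ?_
    intro x hx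
    rw [(hqd x).derivWithin (hud x (Set.Ico_subset_Icc_self hx))]
    have hde : deriv (fun t : ℝ => Real.exp (-t)) x = -Real.exp (-x) := by
      have hcd : HasDerivAt (fun t : ℝ => Real.exp (-t)) (Real.exp (-x) * (-1)) x :=
        (Real.hasDerivAt_exp (-x)).comp x ((hasDerivAt_id x).neg)
      simpa using hcd.deriv
    have hd : deriv q x = (deriv (deriv g) x + deriv g x) * Real.exp (-x)
        + (deriv g x + g x) * (-Real.exp (-x)) := by
      rw [hq]
      rw [deriv_fun_mul ((hg' x).fun_add (hg x)) (hexp x), deriv_fun_add (hg' x) (hg x), hde]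
    rw [hd, geq x (Set.Ico_subset_Icc_self hx)]
    ring
  have hpa : p a = 0 := by show (deriv g a - g a) * Real.exp a = 0; rw [hga, hga']; ring
  have hqa : q a = 0 := by
    show (deriv g a + g a) * Real.exp (-a) = 0; rw [hga, hga']; ring
  have hp0 : p 0 = 0 := by rw [← hpc a ha, hpa]
  have hq0 : q 0 = 0 := by rw [← hqc a ha, hqa]
  intro t ht
  have h1 : (deriv g t - g t) * Real.exp t = 0 := by
    have := hpc t ht; rw [hp0] at this; exact this
  have h2 : (deriv g t + g t) * Real.exp (-t) = 0 := by
    have := hqc t ht; rw [hq0] at this; exact this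
  have e1 : deriv g t - g t = 0 :=
    (mul_eq_zero.mp h1).resolve_right (Real.exp_ne_zero t)
  have e2 : deriv g t + g t = 0 :=
    (mul_eq_zero.mp h2).resolve_right (Real.exp_ne_zero (-t))
  linarith

theorem stmt2 (h g : ℝ → ℝ) (T : ℝ)
    (hh : Differentiable ℝ h) (hh' : Differentiable ℝ (deriv h))
    (hg : Differentiable ℝ g) (hg' : Differentiable ℝ (deriv g))
    (hcomp : ∀ t ∈ Set.Icc 0 T, h t ≤ deriv (deriv h) t)
    (geq : ∀ t ∈ Set.Icc 0 T, deriv (deriv g) t = g t)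
    (h0 : h 0 = g 0) (h0' : deriv h 0 = deriv g 0)
    (hpos : ∀ t ∈ Set.Icc 0 T, 0 ≤ h t)
    (gpos : ∀ t ∈ Set.Icc 0 T, 0 ≤ g t) :
    ∀ t ∈ Set.Icc 0 T, g t ≤ h t := by
  intro t₀ ht₀
  rcases eq_or_lt_of_le ht₀.1 with h00 | ht₀pos
  · rw [← h00, h0]
  rcases eq_or_lt_of_le (gpos t₀ ht₀) with hgz | hgt₀
  · rw [← hgz]; exact hpos t₀ ht₀
  have hT : 0 < T := lt_of_lt_of_le ht₀pos ht₀.2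
  -- the Wronskian η = h' g - g' h is nonnegative on [0,T]
  set η : ℝ → ℝ := fun t => deriv h t * g t - deriv g t * h t with hη
  have hηd : Differentiable ℝ η := (hh'.mul hg).sub (hg'.mul hh)
  have hηmono : MonotoneOn η (Set.Icc 0 T) := by
    refine monotoneOn_of_deriv_nonneg (convex_Icc 0 T) hηd.continuous.continuousOn
      hηd.differentiableOn ?_
    intro x hx
    rw [interior_Icc] at hx
    have hxI : x ∈ Set.Icc 0 T := Set.Ioo_subset_Icc_self hx
    have hd : deriv η x = deriv (deriv h) x * g x - deriv (deriv g) x * h x := by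
      rw [hη, deriv_fun_sub ((hh' x).fun_mul (hg x)) ((hg' x).fun_mul (hh x)),
        deriv_fun_mul (hh' x) (hg x), deriv_fun_mul (hg' x) (hh x)]
      ring
    rw [hd, geq x hxI]
    have hm := mul_le_mul_of_nonneg_right (hcomp x hxI) (gpos x hxI)
    nlinarith [hm]
  have hηnn : ∀ x ∈ Set.Icc 0 T, 0 ≤ deriv h x * g x - deriv g x * h x := by
    intro x hx
    have h0m : (0:ℝ) ∈ Set.Icc 0 T := Set.left_mem_Icc.mpr (le_of_lt hT)
    have hmono := hηmono h0m hx hx.1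
    have hη0 : η 0 = 0 := by
      show deriv h 0 * g 0 - deriv g 0 * h 0 = 0
      rw [h0, h0']; ring
    have : η 0 ≤ η x := hmono
    have hηx : η x = deriv h x * g x - deriv g x * h x := rfl
    linarith [hη0 ▸ this, hηx ▸ this]
  -- a : last zero of g in [0, t₀] (or 0)
  set Z : Set ℝ := insert 0 {t ∈ Set.Icc 0 t₀ | g t = 0} with hZ
  have hZc : IsCompact Z := by
    apply IsCompact.insert
    exact (isCompact_Icc.inter_right (isClosed_eq hg.continuous continuous_const))
  set a : ℝ := sSup Z with haDef
  have haZ : a ∈ Z := hZc.sSup_mem ⟨0, Set.mem_insert 0 _⟩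
  have haIcc : a ∈ Set.Icc 0 t₀ := by
    rcases haZ with h' | h'
    · rw [h']; exact ⟨le_refl 0, le_of_lt ht₀pos⟩
    · exact h'.1
  have halt : a < t₀ := by
    refine lt_of_le_of_ne haIcc.2 ?_
    intro he
    rcases haZ with h' | h'
    · rw [he] at h'; exact (ne_of_gt ht₀pos) h'
    · rw [he] at h'; exact (ne_of_gt hgt₀) h'.2
  have hIocIcc : Set.Ioc a t₀ ⊆ Set.Icc 0 T := fun x hx =>
    ⟨le_trans haIcc.1 (le_of_lt hx.1), le_trans hx.2 ht₀.2⟩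
  -- g > 0 on (a, t₀]
  have hgIoc : ∀ x ∈ Set.Ioc a t₀, 0 < g x := by
    intro x hx
    rcases eq_or_lt_of_le (gpos x (hIocIcc hx)) with he | hl
    · exfalso
      have hxZ : x ∈ Z := Set.mem_insert_iff.mpr (Or.inr
        ⟨⟨le_trans haIcc.1 (le_of_lt hx.1), hx.2⟩, he.symm⟩)
      exact absurd (le_csSup hZc.bddAbove hxZ) (not_le_of_gt hx.1)
    · exact hl
  -- w/g is monotone on (a, t₀]
  set w : ℝ → ℝ := fun t => h t - g t with hw
  have hwd : Differentiable ℝ w := hh.sub hg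
  have hrm : MonotoneOn (fun t => w t / g t) (Set.Ioc a t₀) := by
    refine monotoneOn_of_deriv_nonneg (convex_Ioc a t₀) ?_ ?_ ?_
    · exact ContinuousOn.div hwd.continuous.continuousOn hg.continuous.continuousOn
        (fun x hx => ne_of_gt (hgIoc x hx))
    · intro x hx
      rw [interior_Ioc] at hx
      exact ((hwd x).div (hg x)
        (ne_of_gt (hgIoc x (Set.Ioo_subset_Ioc_self hx)))).differentiableWithinAt
    · intro x hx
      rw [interior_Ioc] at hx
      have hgx : g x ≠ 0 := ne_of_gt (hgIoc x (Set.Ioo_subset_Ioc_self hx))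
      rw [deriv_fun_div (hwd x) (hg x) hgx]
      apply div_nonneg _ (sq_nonneg _)
      have hdw : deriv w x = deriv h x - deriv g x := by
        rw [hw]; exact deriv_sub (hh x) (hg x)
      have hwx : w x = h x - g x := rfl
      have hηx := hηnn x (hIocIcc (Set.Ioo_subset_Ioc_self hx))
      rw [hdw, hwx]
      have hr : (deriv h x - deriv g x) * g x - (h x - g x) * deriv g x
          = deriv h x * g x - deriv g x * h x := by ring
      rw [hr]
      exact hηx
  -- Φ s = w t₀ * g s - w s * g t₀ is ≥ 0 on (a, t₀], hence at a by continuity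
  set Φ : ℝ → ℝ := fun s => w t₀ * g s - w s * g t₀ with hΦ
  have hΦnn : ∀ s ∈ Set.Ioc a t₀, 0 ≤ Φ s := by
    intro s hs
    have ht₀m : t₀ ∈ Set.Ioc a t₀ := ⟨halt, le_refl _⟩
    have hmono := hrm hs ht₀m hs.2
    have hgs := hgIoc s hs
    rw [div_le_div_iff₀ hgs hgt₀] at hmono
    show 0 ≤ w t₀ * g s - w s * g t₀
    linarith
  have hΦa : 0 ≤ Φ a := by
    have hΦcont : Continuous Φ :=
      (continuous_const.mul hg.continuous).sub (hwd.continuous.mul continuous_const)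
    have hcl : Set.Icc a t₀ ⊆ {s | 0 ≤ Φ s} := by
      have hsub : closure (Set.Ioc a t₀) ⊆ {s | 0 ≤ Φ s} :=
        closure_minimal hΦnn (isClosed_le continuous_const hΦcont)
      rwa [closure_Ioc (ne_of_lt halt)] at hsub
    exact hcl (Set.left_mem_Icc.mpr (le_of_lt halt))
  have hw0 : w 0 = 0 := by show h 0 - g 0 = 0; rw [h0]; ring
  have haT : a ∈ Set.Icc (0:ℝ) T := ⟨haIcc.1, le_trans haIcc.2 ht₀.2⟩
  -- Main case split
  rcases eq_or_lt_of_le (gpos a haT) with hga | hga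
  · -- g a = 0
    have hga' : g a = 0 := hga.symm
    have hΦaeq : Φ a = w t₀ * g a - w a * g t₀ := rfl
    have hwa : w a ≤ 0 := by
      rw [hΦaeq, hga', mul_zero, zero_sub] at hΦa
      by_contra hcon
      push_neg at hcon
      nlinarith [mul_pos hcon hgt₀]
    have hwa' : h a - g a ≤ 0 := hwa
    have hha : h a = 0 := le_antisymm (by linarith [hga' ▸ hwa']) (hpos a haT)
    rcases eq_or_lt_of_le haIcc.1 with ha0 | hapos
    · -- a = 0
      have hg00 : g 0 = 0 := by rw [← ha0] at hga'; exact hga'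
      by_cases hc : deriv g 0 = 0
      · exfalso
        have hzero := aux_ode_zero hT hg hg' geq
          (Set.left_mem_Icc.mpr (le_of_lt hT)) hg00 hc
        exact (ne_of_gt hgt₀) (hzero t₀ ht₀)
      · -- deriv g 0 > 0 : one-sided derivative argument
        have hgc : 0 ≤ deriv g 0 := by
          refine aux_slope_nonneg hT (hg 0).hasDerivAt hg00 ?_
          intro s hs; exact gpos s ⟨le_of_lt hs.1, hs.2⟩
        have hcpos : 0 < deriv g 0 := lt_of_le_of_ne hgc (Ne.symm hc)
        have hΦ0 : Φ 0 = 0 := by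
          show w t₀ * g 0 - w 0 * g t₀ = 0
          rw [hg00, hw0]; ring
        have hΦder : HasDerivAt Φ (w t₀ * deriv g 0 - deriv w 0 * g t₀) 0 := by
          have h1 : HasDerivAt (fun s => w t₀ * g s) (w t₀ * deriv g 0) 0 :=
            ((hg 0).hasDerivAt).const_mul (w t₀)
          have h2 : HasDerivAt (fun s => w s * g t₀) (deriv w 0 * g t₀) 0 :=
            ((hwd 0).hasDerivAt).mul_const (g t₀)
          exact h1.sub h2
        have hd0 : 0 ≤ w t₀ * deriv g 0 - deriv w 0 * g t₀ := by
          refine aux_slope_nonneg ht₀pos hΦder hΦ0 ?_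
          intro s hs
          refine hΦnn s ?_
          rw [← ha0]
          exact hs
        have hdw0 : deriv w 0 = 0 := by
          rw [hw, deriv_fun_sub (hh 0) (hg 0), h0']; ring
        rw [hdw0, zero_mul, sub_zero] at hd0
        have hwnn : 0 ≤ w t₀ := by
          by_contra hcon
          push_neg at hcon
          nlinarith [mul_neg_of_neg_of_pos hcon hcpos]
        have hwe : w t₀ = h t₀ - g t₀ := rfl
        linarith [hwe ▸ hwnn]
    · -- a interior: g has a local min at a, so g' a = 0, ODE kills g
      have haTlt : a < T := lt_of_lt_of_le halt ht₀.2
      have hnbhd : Set.Ioo (0:ℝ) T ∈ nhds a := isOpen_Ioo.mem_nhds ⟨hapos, haTlt⟩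
      have hmin_g : IsLocalMin g a := by
        filter_upwards [hnbhd] with x hx
        rw [hga']; exact gpos x (Set.Ioo_subset_Icc_self hx)
      have hga'' : deriv g a = 0 := hmin_g.deriv_eq_zero
      exfalso
      have hzero := aux_ode_zero hT hg hg' geq haT hga' hga''
      exact (ne_of_gt hgt₀) (hzero t₀ ht₀)
  · -- g a > 0 : then a = 0 and w 0 = 0 gives the result directly
    have ha0 : a = 0 := by
      rcases haZ with h' | h'
      · exact h'
      · exact absurd h'.2 (ne_of_gt hga)
    have h1 : 0 ≤ Φ 0 := ha0 ▸ hΦa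
    have h2 : Φ 0 = w t₀ * g 0 - w 0 * g t₀ := rfl
    have hg0pos : 0 < g 0 := by rw [ha0] at hga; exact hga
    rw [h2, hw0, zero_mul, sub_zero] at h1
    have hwnn : 0 ≤ w t₀ := by
      by_contra hcon
      push_neg at hcon
      nlinarith [mul_neg_of_neg_of_pos hcon hg0pos]
    have hwe : w t₀ = h t₀ - g t₀ := rfl
    linarith [hwe ▸ hwnn]
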